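/- Fix λ > 0 and consider the penalized Boolean relaxation min_{s ∈ [0,1]^p} sup_{α ∈ ℝ^n} (f(α,s) + λ Σ_j s_j). If there exists a saddle point (ᾱ, s̄) — meaning s̄ ∈ [0,1]^p and f(α, s̄) + λ Σ_j s̄_j ≤ f(ᾱ, s̄) + λ Σ_j s̄_j ≤ f(ᾱ, s) + λ Σ_j s_j for all α ∈ ℝ^n and all s ∈ [0,1]^p — such that λ − (γ/2)(X_jᵀᾱ)² ≠ 0 for every j = 1,…,p, then the relaxation is tight: s̄ ∈ {0,1}^p and inf_{s ∈ [0,1]^p} sup_{α} (f(α,s) + λ Σ_j s_j) = inf_{s ∈ {0,1}^p} sup_{α} (f(α,s) + λ Σ_j s_j). -/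

import Mathlib

-- auxiliary: conjugate bound for convex functions
lemma conj_bound (φ : ℝ → ℝ) (hφ : ConvexOn ℝ Set.univ φ) (u : ℝ) :
    (φ 1 - φ 0) * u - φ u ≤ |φ 1 - 2 * φ 0 + φ (-1)| - φ 0 := by
  have habs : (0:ℝ) ≤ |φ 1 - 2 * φ 0 + φ (-1)| := abs_nonneg _
  rcases le_or_gt u 0 with h | h
  · -- φ 0 ≤ (1/(1-u)) φ u + (-u/(1-u)) φ 1
    have h1 : (0:ℝ) < 1 - u := by linarith
    have key := hφ.2 (Set.mem_univ u) (Set.mem_univ 1)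
      (by positivity : (0:ℝ) ≤ 1/(1-u)) (by
        have : (0:ℝ) ≤ -u := by linarith
        positivity : (0:ℝ) ≤ -u/(1-u)) (by field_simp; ring)
    have harg : (1/(1-u)) • u + (-u/(1-u)) • (1:ℝ) = 0 := by
      simp only [smul_eq_mul]; field_simp; ring
    rw [harg] at key
    simp only [smul_eq_mul] at key
    have key' : (1-u) * φ 0 ≤ φ u + (-u) * φ 1 := by
      have := mul_le_mul_of_nonneg_left key h1.le
      field_simp at this
      linarith [this]
    nlinarith
  · rcases le_or_gt u 1 with h2 | h2
    · -- φ 0 ≤ (u/(1+u)) φ (-1) + (1/(1+u)) φ u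
      have h1 : (0:ℝ) < 1 + u := by linarith
      have key := hφ.2 (Set.mem_univ (-1:ℝ)) (Set.mem_univ u)
        (by positivity : (0:ℝ) ≤ u/(1+u)) (by positivity : (0:ℝ) ≤ 1/(1+u))
        (by field_simp; ring)
      have harg : (u/(1+u)) • (-1:ℝ) + (1/(1+u)) • u = 0 := by
        simp only [smul_eq_mul]; field_simp; ring
      rw [harg] at key
      simp only [smul_eq_mul] at key
      have key' : (1+u) * φ 0 ≤ u * φ (-1) + φ u := by
        have := mul_le_mul_of_nonneg_left key h1.le
        field_simp at this
        linarith [this]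
      have hb : u * (φ 1 - 2 * φ 0 + φ (-1)) ≤ |φ 1 - 2 * φ 0 + φ (-1)| := by
        calc u * (φ 1 - 2 * φ 0 + φ (-1)) ≤ u * |φ 1 - 2 * φ 0 + φ (-1)| :=
              mul_le_mul_of_nonneg_left (le_abs_self _) h.le
          _ ≤ 1 * |φ 1 - 2 * φ 0 + φ (-1)| := by
              exact mul_le_mul_of_nonneg_right h2 habs
          _ = _ := one_mul _
      nlinarith
    · -- φ 1 ≤ (1/u) φ u + (1 - 1/u) φ 0
      have h1 : (0:ℝ) < u := by linarith
      have key := hφ.2 (Set.mem_univ u) (Set.mem_univ (0:ℝ))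
        (by positivity : (0:ℝ) ≤ 1/u) (by
          have : (1:ℝ)/u ≤ 1 := by
            rw [div_le_one h1]; linarith
          linarith : (0:ℝ) ≤ 1 - 1/u) (by ring)
      have harg : (1/u) • u + (1 - 1/u) • (0:ℝ) = 1 := by
        simp only [smul_eq_mul]; field_simp; ring
      rw [harg] at key
      simp only [smul_eq_mul] at key
      have key' : u * φ 1 ≤ φ u + (u - 1) * φ 0 := by
        have := mul_le_mul_of_nonneg_left key h1.le
        field_simp at this
        linarith [this]
      nlinarith

lemma ecoe_sum {ι : Type*} (s : Finset ι) (g : ι → ℝ) :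
    ((∑ i ∈ s, g i : ℝ) : EReal) = ∑ i ∈ s, ((g i : ℝ) : EReal) :=
  map_sum (⟨⟨(fun x : ℝ => (x : EReal)), EReal.coe_zero⟩, EReal.coe_add⟩ : ℝ →+ EReal) g s

lemma update_sum {q : ℕ} (k : Fin q) (f g : Fin q → ℝ) (v : ℝ) :
    ∑ i, Function.update f k v i * g i = v * g k + ∑ i ∈ Finset.univ.erase k, f i * g i := by
  rw [← Finset.add_sum_erase _ (fun i => Function.update f k v i * g i) (Finset.mem_univ k)]
  rw [Function.update_self]
  congr 1
  exact Finset.sum_congr rfl fun i hi => by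
    rw [Function.update_of_ne (Finset.ne_of_mem_erase hi)]

lemma update_sum' {q : ℕ} (k : Fin q) (f : Fin q → ℝ) (v : ℝ) :
    ∑ i, Function.update f k v i = v + ∑ i ∈ Finset.univ.erase k, f i := by
  rw [← Finset.add_sum_erase _ (fun i => Function.update f k v i) (Finset.mem_univ k)]
  rw [Function.update_self]
  congr 1
  exact Finset.sum_congr rfl fun i hi => by
    rw [Function.update_of_ne (Finset.ne_of_mem_erase hi)]


open scoped BigOperators

theorem penalized_boolean_relaxation_tight
    {n p : ℕ}
    (X : Matrix (Fin n) (Fin p) ℝ) (y : Fin n → ℝ)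
    (γ : ℝ) (hγ : 0 < γ) (lam : ℝ) (hlam : 0 < lam)
    (ℓ : ℝ → ℝ → ℝ) (hconv : ∀ z : ℝ, ConvexOn ℝ Set.univ (ℓ z))
    (lhat : ℝ → ℝ → EReal)
    (hlhat : ∀ z a : ℝ, lhat z a = ⨆ u : ℝ, ((u * a - ℓ z u : ℝ) : EReal))
    (f : (Fin n → ℝ) → (Fin p → ℝ) → EReal)
    (hf : ∀ α s, f α s =
      -(∑ i, lhat (y i) (α i))
        - ((γ / 2 * ∑ j, s j * (∑ i, X i j * α i) ^ 2 : ℝ) : EReal))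
    (abar : Fin n → ℝ) (sbar : Fin p → ℝ)
    (hsbar : ∀ j, 0 ≤ sbar j ∧ sbar j ≤ 1)
    (hsaddle1 : ∀ α : Fin n → ℝ,
      f α sbar + ((lam * ∑ j, sbar j : ℝ) : EReal)
        ≤ f abar sbar + ((lam * ∑ j, sbar j : ℝ) : EReal))
    (hsaddle2 : ∀ s : Fin p → ℝ, (∀ j, 0 ≤ s j ∧ s j ≤ 1) →
      f abar sbar + ((lam * ∑ j, sbar j : ℝ) : EReal)
        ≤ f abar s + ((lam * ∑ j, s j : ℝ) : EReal))
    (hgap : ∀ j, lam - γ / 2 * (∑ i, X i j * abar i) ^ 2 ≠ 0) :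
    (∀ j, sbar j = 0 ∨ sbar j = 1) ∧
    (⨅ s : {s : Fin p → ℝ // ∀ j, 0 ≤ s j ∧ s j ≤ 1},
        ⨆ α : Fin n → ℝ, f α s.1 + ((lam * ∑ j, s.1 j : ℝ) : EReal))
      =
    (⨅ s : {s : Fin p → ℝ // ∀ j, s j = 0 ∨ s j = 1},
        ⨆ α : Fin n → ℝ, f α s.1 + ((lam * ∑ j, s.1 j : ℝ) : EReal)) := by
  -- lower bound for lhat
  have hlow : ∀ z a : ℝ, ((-(ℓ z 0) : ℝ) : EReal) ≤ lhat z a := by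
    intro z a
    rw [hlhat]
    have := le_iSup (fun u : ℝ => ((u * a - ℓ z u : ℝ) : EReal)) 0
    simpa using this
  -- upper bound for lhat at the special slope
  have hup : ∀ z : ℝ, lhat z (ℓ z 1 - ℓ z 0)
      ≤ ((|ℓ z 1 - 2 * ℓ z 0 + ℓ z (-1)| - ℓ z 0 : ℝ) : EReal) := by
    intro z
    rw [hlhat]
    refine iSup_le fun u => ?_
    rw [EReal.coe_le_coe_iff]
    have := conj_bound (ℓ z) (hconv z) u
    linarith
  have hne_bot : ∀ z a, lhat z a ≠ ⊥ :=
    fun z a => ((EReal.bot_lt_coe _).trans_le (hlow z a)).ne'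
  -- the special dual point with finite value
  set αstar : Fin n → ℝ := fun i => ℓ (y i) 1 - ℓ (y i) 0 with hαstar
  have hfin : ∀ i, ∃ r : ℝ, lhat (y i) (αstar i) = (r : EReal) := by
    intro i
    refine ⟨(lhat (y i) (αstar i)).toReal, (EReal.coe_toReal ?_ (hne_bot _ _)).symm⟩
    exact ((hup (y i)).trans_lt (EReal.coe_lt_top _)).ne
  choose t ht using hfin
  have hTsum : (∑ i, lhat (y i) (αstar i)) = ((∑ i, t i : ℝ) : EReal) := by
    rw [ecoe_sum]
    exact Finset.sum_congr rfl fun i _ => ht i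
  -- ∑ lhat (y i) (abar i) is not ⊤
  have hAne_top : (∑ i, lhat (y i) (abar i)) ≠ ⊤ := by
    intro hA
    have h1 := hsaddle1 αstar
    rw [hf, hf, hA, hTsum] at h1
    simp only [EReal.neg_top] at h1
    rw [show (⊥ : EReal) - ((γ / 2 * ∑ j, sbar j * (∑ i, X i j * abar i) ^ 2 : ℝ) : EReal) = ⊥
        from by rw [sub_eq_add_neg, ← EReal.coe_neg, EReal.bot_add]] at h1
    rw [EReal.bot_add, ← EReal.coe_neg, ← EReal.coe_sub, ← EReal.coe_add] at h1
    exact (EReal.coe_ne_bot _) (le_bot_iff.1 h1)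
  -- each term at abar is finite
  have hterm_fin : ∀ k, ∃ r : ℝ, lhat (y k) (abar k) = (r : EReal) := by
    intro k
    refine ⟨(lhat (y k) (abar k)).toReal, (EReal.coe_toReal ?_ (hne_bot _ _)).symm⟩
    intro htop
    apply hAne_top
    rw [← Finset.add_sum_erase _ (fun i => lhat (y i) (abar i)) (Finset.mem_univ k), htop]
    have hrest : ((∑ i ∈ Finset.univ.erase k, -(ℓ (y i) 0) : ℝ) : EReal)
        ≤ ∑ i ∈ Finset.univ.erase k, lhat (y i) (abar i) := by
      rw [ecoe_sum]
      exact Finset.sum_le_sum fun i _ => hlow (y i) (abar i)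
    exact EReal.top_add_of_ne_bot ((EReal.bot_lt_coe _).trans_le hrest).ne'
  choose u hu using hterm_fin
  set U : ℝ := ∑ i, u i with hU
  have hAsum : (∑ i, lhat (y i) (abar i)) = (U : EReal) := by
    rw [hU, ecoe_sum]
    exact Finset.sum_congr rfl fun i _ => hu i
  set q : Fin p → ℝ := fun j => (∑ i, X i j * abar i) ^ 2 with hq
  -- the value at (abar, s) as a real number
  have hcomp : ∀ s : Fin p → ℝ,
      f abar s + ((lam * ∑ j, s j : ℝ) : EReal)
        = ((-U - γ / 2 * ∑ j, s j * q j + lam * ∑ j, s j : ℝ) : EReal) := by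
    intro s
    rw [hf, hAsum, ← EReal.coe_neg, ← EReal.coe_sub, ← EReal.coe_add]
  -- real-valued saddle inequality in s
  have hreal2 : ∀ s : Fin p → ℝ, (∀ j, 0 ≤ s j ∧ s j ≤ 1) →
      -U - γ / 2 * ∑ j, sbar j * q j + lam * ∑ j, sbar j
        ≤ -U - γ / 2 * ∑ j, s j * q j + lam * ∑ j, s j := by
    intro s hs
    have := hsaddle2 s hs
    rw [hcomp, hcomp] at this
    exact EReal.coe_le_coe_iff.1 this
  -- binary claim
  have hbin : ∀ j, sbar j = 0 ∨ sbar j = 1 := by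
    intro k
    rcases (hgap k).lt_or_gt with hc | hc
    · -- lam - γ/2 q k < 0 : sbar k = 1
      right
      set s' := Function.update sbar k 1 with hs'
      have hbox : ∀ j, 0 ≤ s' j ∧ s' j ≤ 1 := by
        intro j
        rcases eq_or_ne j k with rfl | hjk
        · simp [hs']
        · simp only [hs', Function.update_of_ne hjk]; exact hsbar j
      have h2 := hreal2 s' hbox
      rw [hs'] at h2
      rw [update_sum k sbar q 1, update_sum' k sbar 1] at h2
      have e1 : ∑ j, sbar j * q j = sbar k * q k + ∑ j ∈ Finset.univ.erase k, sbar j * q j :=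
        (Finset.add_sum_erase _ (fun j => sbar j * q j) (Finset.mem_univ k)).symm
      have e2 : ∑ j, sbar j = sbar k + ∑ j ∈ Finset.univ.erase k, sbar j :=
        (Finset.add_sum_erase _ sbar (Finset.mem_univ k)).symm
      rw [e1, e2] at h2
      have hqk : q k = (∑ i, X i k * abar i) ^ 2 := rfl
      rw [← hqk] at hc
      have hcs : (lam - γ / 2 * q k) * sbar k ≤ (lam - γ / 2 * q k) * 1 := by nlinarith [h2]
      exact le_antisymm (hsbar k).2 ((mul_le_mul_left_of_neg hc).1 hcs)
    · -- lam - γ/2 q k > 0 : sbar k = 0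
      left
      set s' := Function.update sbar k 0 with hs'
      have hbox : ∀ j, 0 ≤ s' j ∧ s' j ≤ 1 := by
        intro j
        rcases eq_or_ne j k with rfl | hjk
        · simp [hs']
        · simp only [hs', Function.update_of_ne hjk]; exact hsbar j
      have h2 := hreal2 s' hbox
      rw [hs'] at h2
      rw [update_sum k sbar q 0, update_sum' k sbar 0] at h2
      have e1 : ∑ j, sbar j * q j = sbar k * q k + ∑ j ∈ Finset.univ.erase k, sbar j * q j :=
        (Finset.add_sum_erase _ (fun j => sbar j * q j) (Finset.mem_univ k)).symm
      have e2 : ∑ j, sbar j = sbar k + ∑ j ∈ Finset.univ.erase k, sbar j :=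
        (Finset.add_sum_erase _ sbar (Finset.mem_univ k)).symm
      rw [e1, e2] at h2
      have hqk : q k = (∑ i, X i k * abar i) ^ 2 := rfl
      rw [← hqk] at hc
      have hcs : (lam - γ / 2 * q k) * sbar k ≤ (lam - γ / 2 * q k) * 0 := by nlinarith [h2]
      exact le_antisymm ((mul_le_mul_iff_of_pos_left hc).1 hcs) (hsbar k).1
  refine ⟨hbin, ?_⟩
  -- tightness of the relaxation
  set F : (Fin p → ℝ) → EReal :=
    fun s => ⨆ α : Fin n → ℝ, f α s + ((lam * ∑ j, s j : ℝ) : EReal) with hF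
  have hFmin : ∀ s : Fin p → ℝ, (∀ j, 0 ≤ s j ∧ s j ≤ 1) → F sbar ≤ F s := by
    intro s hs
    calc F sbar ≤ f abar sbar + ((lam * ∑ j, sbar j : ℝ) : EReal) := iSup_le hsaddle1
      _ ≤ f abar s + ((lam * ∑ j, s j : ℝ) : EReal) := hsaddle2 s hs
      _ ≤ F s := le_iSup (fun α => f α s + ((lam * ∑ j, s j : ℝ) : EReal)) abar
  have hsub : ∀ s : Fin p → ℝ, (∀ j, s j = 0 ∨ s j = 1) → (∀ j, 0 ≤ s j ∧ s j ≤ 1) := by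
    intro s hs j
    rcases hs j with h | h <;> rw [h] <;> norm_num
  refine le_antisymm ?_ ?_
  · exact le_iInf fun s => iInf_le (fun s : {s : Fin p → ℝ // ∀ j, 0 ≤ s j ∧ s j ≤ 1} => F s.1)
      ⟨s.1, hsub s.1 s.2⟩
  · calc (⨅ s : {s : Fin p → ℝ // ∀ j, s j = 0 ∨ s j = 1}, F s.1)
        ≤ F sbar := iInf_le (fun s : {s : Fin p → ℝ // ∀ j, s j = 0 ∨ s j = 1} => F s.1) ⟨sbar, hbin⟩
      _ ≤ ⨅ s : {s : Fin p → ℝ // ∀ j, 0 ≤ s j ∧ s j ≤ 1}, F s.1 :=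
          le_iInf fun s => hFmin s.1 s.2
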